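/- Let G be a finite connected simple graph with n vertices and m edges, all of whose vertices have degree at least 1. If λ ∈ ℂ is an eigenvalue of the transition matrix U (i.e., λ is in the spectrum of U over ℂ), then λ = 1, or λ = −1, or there exists an eigenvalue μ of T(G) over ℂ such that λ² − 2μλ + 1 = 0. (Forward direction of Corollary 4.2.) -/

import Mathlib

open Matrix SimpleGraph Polynomial

/-- The matrix `T(G)`: `T u v = 1 / deg u` if `(u,v)` is a dart of `G`, else `0`. -/
noncomputable def quantumT {V : Type*} [Fintype V] (G : SimpleGraph V)
    [DecidableRel G.Adj] : Matrix V V ℂ :=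
  fun u v => if G.Adj u v then (1 : ℂ) / (G.degree u : ℂ) else 0

/-- The transition matrix `U` of the discrete-time quantum walk on `G`, indexed by darts:
`U e f = 2 / deg (t f)` if `t f = o e` and `f ≠ e⁻¹`, `U e f = 2 / deg (t f) - 1` if
`f = e⁻¹`, and `0` otherwise. -/
noncomputable def quantumU {V : Type*} [Fintype V] (G : SimpleGraph V)
    [DecidableRel G.Adj] [DecidableEq V] : Matrix G.Dart G.Dart ℂ :=
  fun e f =>
    if f.toProd.2 = e.toProd.1 ∧ f ≠ e.symm then (2 : ℂ) / (G.degree f.toProd.2 : ℂ)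
    else if f = e.symm then (2 : ℂ) / (G.degree f.toProd.2 : ℂ) - 1
    else 0

lemma mem_spectrum_iff_exists_eigen {n : Type*} [Fintype n] [DecidableEq n]
    (M : Matrix n n ℂ) (μ : ℂ) :
    μ ∈ spectrum ℂ M ↔ ∃ v, v ≠ 0 ∧ M *ᵥ v = μ • v := by
  rw [spectrum.mem_iff, Matrix.isUnit_iff_isUnit_det, isUnit_iff_ne_zero, not_ne_iff,
    ← Matrix.exists_mulVec_eq_zero_iff]
  constructor
  · rintro ⟨v, hv, h⟩
    refine ⟨v, hv, ?_⟩
    have h1 : (algebraMap ℂ (Matrix n n ℂ)) μ *ᵥ v - M *ᵥ v = 0 := by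
      rw [← Matrix.sub_mulVec]; exact h
    have h2 : (algebraMap ℂ (Matrix n n ℂ)) μ *ᵥ v = μ • v := by
      rw [Algebra.algebraMap_eq_smul_one, Matrix.smul_mulVec, Matrix.one_mulVec]
    rw [h2, sub_eq_zero] at h1
    exact h1.symm
  · rintro ⟨v, hv, h⟩
    refine ⟨v, hv, ?_⟩
    rw [Matrix.sub_mulVec, Algebra.algebraMap_eq_smul_one, Matrix.smul_mulVec,
      Matrix.one_mulVec, h, sub_self]

lemma spectrum_transpose_eq {n : Type*} [Fintype n] [DecidableEq n]
    (M : Matrix n n ℂ) : spectrum ℂ Mᵀ = spectrum ℂ M := by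
  ext μ
  rw [spectrum.mem_iff, spectrum.mem_iff, Matrix.isUnit_iff_isUnit_det,
    Matrix.isUnit_iff_isUnit_det]
  have : ((algebraMap ℂ (Matrix n n ℂ)) μ - Mᵀ).det
      = ((algebraMap ℂ (Matrix n n ℂ)) μ - M).det := by
    rw [← Matrix.det_transpose ((algebraMap ℂ (Matrix n n ℂ)) μ - M), Matrix.transpose_sub,
      Algebra.algebraMap_eq_smul_one, Matrix.transpose_smul, Matrix.transpose_one]
  rw [this]

theorem stmt4 {V : Type*} [Fintype V] [DecidableEq V] (G : SimpleGraph V)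
    [DecidableRel G.Adj] (hconn : G.Connected) (hdeg : ∀ v : V, 1 ≤ G.degree v)
    (lam : ℂ) (hlam : lam ∈ spectrum ℂ (quantumU G)) :
    lam = 1 ∨ lam = -1 ∨
      ∃ μ ∈ spectrum ℂ (quantumT G), lam ^ 2 - 2 * μ * lam + 1 = 0 := by
  classical
  obtain ⟨f, hf0, hf⟩ := (mem_spectrum_iff_exists_eigen _ _).mp hlam
  set F : V → V → ℂ := fun u w => if h : G.Adj u w then f (Dart.mk (u, w) h) else 0 with hFdef
  set g : V → ℂ := fun v => ∑ u, F u v with hgdef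
  have hdegC : ∀ v, (G.degree v : ℂ) ≠ 0 := fun v =>
    Nat.cast_ne_zero.2 (Nat.one_le_iff_ne_zero.mp (hdeg v))
  -- the master reindexing lemma
  have hgg : ∀ v : V, (∑ d : G.Dart, if d.toProd.2 = v then f d else 0) = g v := by
    intro v
    have e1 : (∑ d : G.Dart, if d.toProd.2 = v then f d else 0)
        = ∑ p : {p : V × V // G.Adj p.1 p.2},
            (if (p : V × V).2 = v then F (p : V × V).1 (p : V × V).2 else 0) := by
      refine Fintype.sum_equiv
        ⟨fun d => ⟨d.toProd, d.adj⟩, fun p => ⟨p.1, p.2⟩, fun d => rfl, fun p => rfl⟩ _ _ ?_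
      intro d
      simp only [Equiv.coe_fn_mk, hFdef, dif_pos d.adj]
    have e2 : (∑ p : {p : V × V // G.Adj p.1 p.2},
          (if (p : V × V).2 = v then F (p : V × V).1 (p : V × V).2 else 0))
        = ∑ p : V × V, (if p.2 = v then F p.1 p.2 else 0) := by
      rw [← Finset.sum_subtype (Finset.univ.filter (fun p : V × V => G.Adj p.1 p.2))
        (by simp) (fun p : V × V => if p.2 = v then F p.1 p.2 else 0)]
      refine Finset.sum_filter_of_ne ?_
      intro p _ hp
      by_contra h
      apply hp
      simp [hFdef, h]
    rw [e1, e2, Fintype.sum_prod_type, hgdef]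
    refine Finset.sum_congr rfl fun u _ => ?_
    simp
  have hcount : ∀ (v : V) (c : ℂ), (∑ u : V, if G.Adj u v then c else 0)
      = (G.degree v : ℂ) * c := by
    intro v c
    rw [← Finset.sum_filter, Finset.sum_const]
    have : Finset.univ.filter (fun u => G.Adj u v) = G.neighborFinset v := by
      ext u; simp [G.adj_comm]
    rw [this, SimpleGraph.card_neighborFinset_eq_degree, nsmul_eq_mul]
  -- computing U *ᵥ f
  have hU : ∀ e : G.Dart, (quantumU G *ᵥ f) e
      = 2 / (G.degree e.toProd.1 : ℂ) * g e.toProd.1 - f e.symm := by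
    intro e
    have hterm : ∀ d : G.Dart, quantumU G e d * f d
        = (if d.toProd.2 = e.toProd.1 then 2 / (G.degree e.toProd.1 : ℂ) * f d else 0)
          - (if d = e.symm then f d else 0) := by
      intro d
      by_cases h1 : d = e.symm
      · subst h1
        have h2 : e.symm.toProd.2 = e.toProd.1 := rfl
        have hval : quantumU G e e.symm = 2 / (G.degree e.toProd.1 : ℂ) - 1 := by
          simp only [quantumU]
          rw [if_neg (by simp), if_pos trivial, h2]
        rw [hval, if_pos h2, if_pos rfl]
        ring
      · by_cases h2 : d.toProd.2 = e.toProd.1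
        · have hval : quantumU G e d = 2 / (G.degree e.toProd.1 : ℂ) := by
            simp only [quantumU]
            rw [if_pos ⟨h2, h1⟩, h2]
          rw [hval, if_pos h2, if_neg h1]
          ring
        · have hval : quantumU G e d = 0 := by
            simp only [quantumU]
            rw [if_neg (fun hc => h2 hc.1), if_neg h1]
          rw [hval, if_neg h2, if_neg h1]
          ring
    calc (quantumU G *ᵥ f) e = ∑ d : G.Dart, quantumU G e d * f d := rfl
      _ = (∑ d : G.Dart, if d.toProd.2 = e.toProd.1 then 2 / (G.degree e.toProd.1 : ℂ) * f d
            else 0) - ∑ d : G.Dart, (if d = e.symm then f d else 0) := by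
          rw [← Finset.sum_sub_distrib]; exact Finset.sum_congr rfl fun d _ => hterm d
      _ = 2 / (G.degree e.toProd.1 : ℂ) * g e.toProd.1 - f e.symm := by
          rw [Finset.sum_ite_eq' Finset.univ e.symm f]
          rw [if_pos (Finset.mem_univ _)]
          congr 1
          rw [← hgg e.toProd.1, Finset.mul_sum]
          exact Finset.sum_congr rfl fun d _ => by
            by_cases h : d.toProd.2 = e.toProd.1 <;> simp [h]
  have Eq1 : ∀ e : G.Dart, lam * f e
      = 2 / (G.degree e.toProd.1 : ℂ) * g e.toProd.1 - f e.symm := by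
    intro e
    have := congrFun hf e
    rw [hU e] at this
    simpa [mul_comm] using this.symm
  have Eq2 : ∀ e : G.Dart, lam * f e.symm
      = 2 / (G.degree e.toProd.2 : ℂ) * g e.toProd.2 - f e := by
    intro e
    have := Eq1 e.symm
    rw [SimpleGraph.Dart.symm_symm] at this
    exact this
  by_cases hg : ∀ v, g v = 0
  · -- g = 0 : lam = ±1
    obtain ⟨e, he⟩ := Function.ne_iff.mp hf0
    have h1 := Eq1 e; have h2 := Eq2 e
    simp only [hg] at h1 h2
    have hsq : (lam - 1) * (lam + 1) * f e = 0 := by linear_combination lam * h1 - h2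
    rcases mul_eq_zero.mp hsq with h | h
    · rcases mul_eq_zero.mp h with h | h
      · exact Or.inl (by linear_combination h)
      · exact Or.inr (Or.inl (by linear_combination h))
    · exact absurd h he
  · push_neg at hg
    obtain ⟨v0, hv0⟩ := hg
    have Eq3 : ∀ e : G.Dart, (lam ^ 2 - 1) * f e
        = 2 * lam / (G.degree e.toProd.1 : ℂ) * g e.toProd.1
          - 2 / (G.degree e.toProd.2 : ℂ) * g e.toProd.2 := by
      intro e
      linear_combination lam * Eq1 e - Eq2 e
    have hF3 : ∀ u w : V, (lam ^ 2 - 1) * F u w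
        = if G.Adj u w then 2 * lam / (G.degree u : ℂ) * g u - 2 / (G.degree w : ℂ) * g w
          else 0 := by
      intro u w
      by_cases h : G.Adj u w
      · rw [if_pos h]
        have h3 := Eq3 (Dart.mk (u, w) h)
        simp only [hFdef, dif_pos h]
        exact h3
      · simp [hFdef, h]
    have hkey : ∀ v : V, (lam ^ 2 + 1) * g v = 2 * lam * ((quantumT G)ᵀ *ᵥ g) v := by
      intro v
      have hsum : (∑ u : V, (lam ^ 2 - 1) * F u v)
          = ∑ u : V, (if G.Adj u v then 2 * lam / (G.degree u : ℂ) * g u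
              - 2 / (G.degree v : ℂ) * g v else 0) :=
        Finset.sum_congr rfl fun u _ => hF3 u v
      rw [← Finset.mul_sum] at hsum
      have hsplit : (∑ u : V, (if G.Adj u v then 2 * lam / (G.degree u : ℂ) * g u
              - 2 / (G.degree v : ℂ) * g v else 0))
          = (∑ u : V, (if G.Adj u v then 2 * lam / (G.degree u : ℂ) * g u else 0))
            - ∑ u : V, (if G.Adj u v then 2 / (G.degree v : ℂ) * g v else 0) := by
        rw [← Finset.sum_sub_distrib]
        exact Finset.sum_congr rfl fun u _ => by by_cases h : G.Adj u v <;> simp [h]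
      have hconst : (∑ u : V, (if G.Adj u v then 2 / (G.degree v : ℂ) * g v else 0))
          = 2 * g v := by
        have h := hdegC v
        rw [hcount v]
        field_simp
      have hT : ((quantumT G)ᵀ *ᵥ g) v
          = ∑ u : V, (if G.Adj u v then 1 / (G.degree u : ℂ) * g u else 0) := by
        simp only [Matrix.mulVec, Matrix.transpose_apply, quantumT, dotProduct]
        exact Finset.sum_congr rfl fun u _ => by by_cases h : G.Adj u v <;> simp [h]
      have hfirst : (∑ u : V, (if G.Adj u v then 2 * lam / (G.degree u : ℂ) * g u else 0))
          = 2 * lam * ((quantumT G)ᵀ *ᵥ g) v := by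
        rw [hT, Finset.mul_sum]
        refine Finset.sum_congr rfl fun u _ => ?_
        split <;> ring
      rw [hsplit, hconst, hfirst] at hsum
      have hgv : g v = ∑ u : V, F u v := rfl
      linear_combination hsum
    have hlam0 : lam ≠ 0 := by
      rintro rfl
      have := hkey v0
      simp only [ne_eq, OfNat.ofNat_ne_zero, not_false_eq_true, zero_pow, zero_add, one_mul,
        mul_zero, zero_mul] at this
      exact hv0 this
    refine Or.inr (Or.inr ⟨(lam ^ 2 + 1) / (2 * lam), ?_, ?_⟩)
    · rw [← spectrum_transpose_eq]
      refine (mem_spectrum_iff_exists_eigen _ _).mpr ⟨g, ?_, ?_⟩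
      · exact Function.ne_iff.mpr ⟨v0, hv0⟩
      · funext v
        have := hkey v
        simp only [Pi.smul_apply, smul_eq_mul]
        rw [div_mul_eq_mul_div, eq_div_iff (mul_ne_zero two_ne_zero hlam0)]
        linear_combination -this
    · have hmu : (lam ^ 2 + 1) / (2 * lam) * (2 * lam) = lam ^ 2 + 1 :=
        div_mul_cancel₀ _ (mul_ne_zero two_ne_zero hlam0)
      linear_combination -hmu
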